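/- Let k be a field of characteristic p > 0 and let R_p be the (p-2)-dimensional representation of S_p given by functions on {1,...,p} with zero sum of values, modulo constants. Then the Dynkin element θ_p acts by zero on R_p. -/

import Mathlib

open MonoidAlgebra

noncomputable def cycleDown (n j : ℕ) : Equiv.Perm (Fin n) :=
  if h : j < n then ((⟨j, h⟩ : Fin n).cycleRange)⁻¹ else 1

/-- The Dynkin element `θ_n = (1 - (2 1))(1 - (3 2 1)) ⋯ (1 - (n ... 1))`. -/
noncomputable def dynkin (R : Type) [CommRing R] (n : ℕ) :
    MonoidAlgebra R (Equiv.Perm (Fin n)) :=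
  ((List.range (n - 1)).map (fun j =>
    (1 : MonoidAlgebra R (Equiv.Perm (Fin n))) -
      MonoidAlgebra.of R (Equiv.Perm (Fin n)) (cycleDown n (j + 1)))).prod

/-- The action of an element of the group ring `k[S_n]` on functions `Fin n → k`,
where a permutation `σ` acts by `(σ • f) i = f (σ⁻¹ i)`. -/
noncomputable def grpAct {k : Type} [CommRing k] {n : ℕ}
    (a : MonoidAlgebra k (Equiv.Perm (Fin n))) (f : Fin n → k) : Fin n → k :=
  fun i => a.coeff.sum fun σ c => c * f (σ⁻¹ i)

section Aux

variable {k : Type} [CommRing k] {n : ℕ}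

lemma grpAct_mul (a b : MonoidAlgebra k (Equiv.Perm (Fin n))) (f : Fin n → k) :
    grpAct (a * b) f = grpAct a (grpAct b f) := by
  funext i
  show (a * b).coeff.sum (fun σ c => c * f (σ⁻¹ i)) = _
  rw [MonoidAlgebra.mul_def]
  simp only [MonoidAlgebra.coeff_finsuppSum, MonoidAlgebra.coeff_single]
  rw [Finsupp.sum_sum_index (h := fun (σ : Equiv.Perm (Fin n)) (c : k) => c * f (σ⁻¹ i))
    (fun _ => zero_mul _) (fun _ _ _ => add_mul _ _ _)]
  refine Finsupp.sum_congr fun σ _ => ?_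
  rw [Finsupp.sum_sum_index (h := fun (σ : Equiv.Perm (Fin n)) (c : k) => c * f (σ⁻¹ i))
    (fun _ => zero_mul _) (fun _ _ _ => add_mul _ _ _)]
  show _ = _ * (b.coeff.sum fun τ d => d * f (τ⁻¹ (σ⁻¹ i)))
  rw [Finsupp.mul_sum]
  refine Finsupp.sum_congr fun τ _ => ?_
  rw [Finsupp.sum_single_index (h := fun (τ : Equiv.Perm (Fin n)) (c : k) => c * f (τ⁻¹ i)) (zero_mul _),
    mul_inv_rev, Equiv.Perm.mul_apply, mul_assoc]

lemma grpAct_one (f : Fin n → k) : grpAct (1 : MonoidAlgebra k (Equiv.Perm (Fin n))) f = f := by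
  funext i
  show (Finsupp.single (1 : Equiv.Perm (Fin n)) (1:k)).sum (fun σ c => c * f (σ⁻¹ i)) = f i
  rw [Finsupp.sum_single_index (h := fun (σ : Equiv.Perm (Fin n)) (c : k) => c * f (σ⁻¹ i)) (zero_mul _)]
  simp

lemma grpAct_sub (a b : MonoidAlgebra k (Equiv.Perm (Fin n))) (f : Fin n → k) :
    grpAct (a - b) f = grpAct a f - grpAct b f := by
  funext i
  show (a - b).coeff.sum (fun σ c => c * f (σ⁻¹ i)) = _
  rw [MonoidAlgebra.coeff_sub, Finsupp.sum_sub_index (h := fun (σ : Equiv.Perm (Fin n)) (c : k) => c * f (σ⁻¹ i)) (fun _ _ _ => sub_mul _ _ _)]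
  rfl

lemma grpAct_of (σ : Equiv.Perm (Fin n)) (f : Fin n → k) :
    grpAct (MonoidAlgebra.of k (Equiv.Perm (Fin n)) σ) f = fun i => f (σ⁻¹ i) := by
  funext i
  show (Finsupp.single σ (1:k)).sum (fun τ c => c * f (τ⁻¹ i)) = f (σ⁻¹ i)
  rw [Finsupp.sum_single_index (h := fun (τ : Equiv.Perm (Fin n)) (c : k) => c * f (τ⁻¹ i)) (zero_mul _), one_mul]

lemma grpAct_one_sub_of (σ : Equiv.Perm (Fin n)) (f : Fin n → k) :
    grpAct ((1 : MonoidAlgebra k (Equiv.Perm (Fin n))) -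
      MonoidAlgebra.of k (Equiv.Perm (Fin n)) σ) f = fun i => f i - f (σ⁻¹ i) := by
  rw [grpAct_sub, grpAct_one, grpAct_of]
  rfl

/-- sum over `Fin (N+1)` of a function supported on `{0,1}`. -/
lemma sum_of_small (N : ℕ) (hN : 1 ≤ N) (g : Fin (N+1) → k)
    (hg : ∀ t : Fin (N+1), 2 ≤ t.val → g t = 0) :
    ∑ t, g t = g ⟨0, Nat.succ_pos N⟩ + g ⟨1, Nat.succ_lt_succ hN⟩ := by
  classical
  rw [← Finset.sum_subset (Finset.subset_univ
      ({⟨0, Nat.succ_pos N⟩, ⟨1, Nat.succ_lt_succ hN⟩} : Finset (Fin (N+1))))]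
  · rw [Finset.sum_pair (by simp [Fin.ext_iff])]
  · intro x _ hx
    apply hg
    simp only [Finset.mem_insert, Finset.mem_singleton] at hx
    push_neg at hx
    rcases hx with ⟨h0, h1⟩
    have h0' : x.val ≠ 0 := fun h => h0 (Fin.ext h)
    have h1' : x.val ≠ 1 := fun h => h1 (Fin.ext h)
    omega

/-- The partial product of the Dynkin element. -/
noncomputable def dynkinPartial (k : Type) [CommRing k] (n m : ℕ) :
    MonoidAlgebra k (Equiv.Perm (Fin n)) :=
  ((List.range m).map (fun j =>
    (1 : MonoidAlgebra k (Equiv.Perm (Fin n))) -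
      MonoidAlgebra.of k (Equiv.Perm (Fin n)) (cycleDown n (j + 1)))).prod

lemma aux_middle (N m : ℕ) (hlt : m + 1 < N + 1) (ρ : Equiv.Perm (Fin (N+1)))
    (hρ : ρ = (⟨m+1, hlt⟩ : Fin (N+1)).cycleRange) (s : Fin (N+1))
    (h1 : 1 ≤ s.val) (h2 : s.val ≤ m + 1) :
    (-1:k)^(s:ℕ) * (m.choose (s:ℕ)) - (-1:k)^((ρ⁻¹ s : Fin (N+1)):ℕ) *
        (m.choose ((ρ⁻¹ s : Fin (N+1)):ℕ))
      = (-1:k)^(s:ℕ) * ((m+1).choose (s:ℕ)) := by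
  obtain ⟨t, ht⟩ : ∃ t, s.val = t + 1 := ⟨s.val - 1, by omega⟩
  have htN : t < N + 1 := by omega
  have hρinv : ρ⁻¹ s = ⟨t, htN⟩ := by
    have happ : ρ ⟨t, htN⟩ = s := by
      rw [hρ, Fin.cycleRange_of_lt (show (⟨t, htN⟩ : Fin (N+1)) < ⟨m+1, hlt⟩ by
        rw [Fin.lt_def]; simp only [Fin.val_mk]; omega)]
      rw [Fin.ext_iff, Fin.val_add_one_of_lt (show (⟨t, htN⟩ : Fin (N+1)) < Fin.last N by
        rw [Fin.lt_def]; simp only [Fin.val_mk, Fin.val_last]; omega)]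
      simp only [Fin.val_mk]
      omega
    rw [← happ, Equiv.Perm.coe_inv, Equiv.symm_apply_apply]
  rw [hρinv]
  simp only [ht]
  rw [Nat.choose_succ_succ m t]
  push_cast
  ring

lemma key (N : ℕ) (m : ℕ) (hm : 1 ≤ m) (hmn : m ≤ N) (f : Fin (N+1) → k) :
    grpAct (dynkinPartial k (N+1) m) f
    = fun i => (if i.val = 0 then 1 else if i.val = 1 then -1 else 0)
        * ∑ t : Fin (N+1), (-1:k)^(t:ℕ) * (m.choose (t:ℕ)) * f t := by
  induction m, hm using Nat.le_induction generalizing f with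
  | base =>
    have h1 : (1:ℕ) < N + 1 := Nat.succ_lt_succ hmn
    have hcd : cycleDown (N+1) 1 = ((⟨1, h1⟩ : Fin (N+1)).cycleRange)⁻¹ := by
      rw [cycleDown, dif_pos h1]
    rw [dynkinPartial]
    simp only [List.range_succ, List.range_zero, List.nil_append, List.map_cons, List.map_nil,
      List.prod_cons, List.prod_nil, mul_one]
    rw [hcd, grpAct_one_sub_of]
    funext i
    have hsum : ∑ t : Fin (N+1), (-1:k)^(t:ℕ) * ((1:ℕ).choose (t:ℕ)) * f t
        = f ⟨0, Nat.succ_pos N⟩ - f ⟨1, h1⟩ := by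
      rw [sum_of_small N hmn _ (fun t ht => by
        rw [Nat.choose_eq_zero_of_lt (by omega)]; push_cast; ring)]
      norm_num [sub_eq_add_neg]
    rw [inv_inv, hsum]
    rcases Nat.lt_trichotomy i.val 1 with hi | hi | hi
    · have hi0 : i = ⟨0, Nat.succ_pos N⟩ := Fin.ext (show i.val = 0 by omega)
      have hcr : (⟨1, h1⟩ : Fin (N+1)).cycleRange i = ⟨1, h1⟩ := by
        rw [hi0, Fin.cycleRange_of_lt (by rw [Fin.lt_def]; simp only [Fin.val_mk]; omega)]
        rw [Fin.ext_iff, Fin.val_add_one_of_lt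
          (by rw [Fin.lt_def]; simp only [Fin.val_mk, Fin.val_last]; omega)]
      rw [hcr, hi0]
      simp
    · have hi1 : i = ⟨1, h1⟩ := Fin.ext (show i.val = 1 by omega)
      have hcr : (⟨1, h1⟩ : Fin (N+1)).cycleRange i = ⟨0, Nat.succ_pos N⟩ := by
        rw [hi1]
        have h := Fin.cycleRange_self (⟨1, h1⟩ : Fin (N+1))
        rw [h]
        exact Fin.ext rfl
      rw [hcr, hi1]
      show f ⟨1, h1⟩ - f ⟨0, Nat.succ_pos N⟩
        = (if (1:ℕ) = 0 then 1 else if (1:ℕ) = 1 then (-1:k) else 0)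
          * (f ⟨0, Nat.succ_pos N⟩ - f ⟨1, h1⟩)
      norm_num
    · have hcr : (⟨1, h1⟩ : Fin (N+1)).cycleRange i = i :=
        Fin.cycleRange_of_gt (by rw [Fin.lt_def]; simp only [Fin.val_mk]; omega)
      rw [hcr]
      have h0 : ¬ i.val = 0 := by omega
      have h1' : ¬ i.val = 1 := by omega
      simp [h0, h1']
  | succ m hm ih =>
    have hmN : m ≤ N := by omega
    have hlt : m + 1 < N + 1 := Nat.succ_lt_succ hmn
    have hcd : cycleDown (N+1) (m+1) = ((⟨m+1, hlt⟩ : Fin (N+1)).cycleRange)⁻¹ := by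
      rw [cycleDown, dif_pos hlt]
    set ρ := (⟨m+1, hlt⟩ : Fin (N+1)).cycleRange with hρ
    have hsplit : dynkinPartial k (N+1) (m+1)
        = dynkinPartial k (N+1) m *
          ((1 : MonoidAlgebra k (Equiv.Perm (Fin (N+1)))) -
            MonoidAlgebra.of k (Equiv.Perm (Fin (N+1))) (cycleDown (N+1) (m+1))) := by
      rw [dynkinPartial, dynkinPartial, List.range_succ, List.map_append, List.prod_append]
      simp
    set g : Fin (N+1) → k := fun i => f i - f (ρ i) with hgdef
    have hg : grpAct ((1 : MonoidAlgebra k (Equiv.Perm (Fin (N+1)))) -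
        MonoidAlgebra.of k (Equiv.Perm (Fin (N+1))) (cycleDown (N+1) (m+1))) f = g := by
      rw [hcd, grpAct_one_sub_of]
      funext j
      rw [inv_inv]
    rw [hsplit, grpAct_mul, hg, ih hmN]
    funext i
    congr 1
    -- now show the sum identity
    have hterm : ∀ s : Fin (N+1),
        (-1:k)^(s:ℕ) * (m.choose (s:ℕ)) - (-1:k)^((ρ⁻¹ s : Fin (N+1)):ℕ) *
          (m.choose ((ρ⁻¹ s : Fin (N+1)):ℕ))
        = (-1:k)^(s:ℕ) * ((m+1).choose (s:ℕ)) := by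
      intro s
      rcases Nat.lt_trichotomy s.val 1 with hs | hs | hs
      · -- s = 0
        have hs0 : s = ⟨0, Nat.succ_pos N⟩ := Fin.ext (show s.val = 0 by omega)
        have hρinv : ρ⁻¹ s = ⟨m+1, hlt⟩ := by
          have h1 : ρ ⟨m+1, hlt⟩ = s := by
            rw [hs0, hρ]
            have := Fin.cycleRange_self (⟨m+1, hlt⟩ : Fin (N+1))
            rw [this]; rfl
          rw [← h1, Equiv.Perm.coe_inv, Equiv.symm_apply_apply]
        rw [hρinv, hs0]
        show (-1:k)^(0:ℕ) * (m.choose 0 : ℕ) - (-1:k)^(m+1) * (m.choose (m+1) : ℕ)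
          = (-1:k)^(0:ℕ) * ((m+1).choose 0 : ℕ)
        rw [Nat.choose_eq_zero_of_lt (Nat.lt_succ_self m)]
        simp
      ·
        exact aux_middle N m hlt ρ hρ s (by omega) (by omega)
      · rcases Nat.lt_or_ge (m+1) s.val with hgt | hle
        · -- s.val > m+1 : ρ⁻¹ s = s
          have hρinv : ρ⁻¹ s = s := by
            have h1 : ρ s = s :=
              Fin.cycleRange_of_gt (by rw [Fin.lt_def]; simp only [Fin.val_mk]; omega)
            rw [← h1, Equiv.Perm.coe_inv, Equiv.symm_apply_apply, h1]
          rw [hρinv, Nat.choose_eq_zero_of_lt (show m < s.val by omega),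
            Nat.choose_eq_zero_of_lt (show m + 1 < s.val by omega)]
          push_cast
          ring
        · exact aux_middle N m hlt ρ hρ s (by omega) hle
    calc ∑ t : Fin (N+1), (-1:k)^(t:ℕ) * (m.choose (t:ℕ)) * g t
        = ∑ t : Fin (N+1), ((-1:k)^(t:ℕ) * (m.choose (t:ℕ)) * f t
            - (-1:k)^(t:ℕ) * (m.choose (t:ℕ)) * f (ρ t)) := by
          refine Finset.sum_congr rfl fun t _ => ?_
          rw [show g t = f t - f (ρ t) from rfl]
          ring
      _ = ∑ t : Fin (N+1), (-1:k)^(t:ℕ) * (m.choose (t:ℕ)) * f t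
            - ∑ t : Fin (N+1), (-1:k)^(t:ℕ) * (m.choose (t:ℕ)) * f (ρ t) := by
          rw [Finset.sum_sub_distrib]
      _ = ∑ s : Fin (N+1), (-1:k)^(s:ℕ) * (m.choose (s:ℕ)) * f s
            - ∑ s : Fin (N+1), (-1:k)^((ρ⁻¹ s : Fin (N+1)):ℕ) *
                (m.choose ((ρ⁻¹ s : Fin (N+1)):ℕ)) * f s := by
          congr 1
          rw [← Equiv.sum_comp ρ (fun s => (-1:k)^((ρ⁻¹ s : Fin (N+1)):ℕ) *
            (m.choose ((ρ⁻¹ s : Fin (N+1)):ℕ)) * f s)]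
          refine Finset.sum_congr rfl fun t _ => ?_
          rw [Equiv.Perm.coe_inv, Equiv.symm_apply_apply]
      _ = ∑ s : Fin (N+1), (-1:k)^(s:ℕ) * ((m+1).choose (s:ℕ)) * f s := by
          rw [← Finset.sum_sub_distrib]
          refine Finset.sum_congr rfl fun s _ => ?_
          rw [← sub_mul, hterm s]

end Aux

theorem dynkin_acts_zero_on_Rp (k : Type) [Field k] (p : ℕ) [Fact p.Prime] [CharP k p]
    (f : Fin p → k) (hf : ∑ i, f i = 0) :
    ∃ c : k, grpAct (dynkin k p) f = fun _ => c := by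
  have hp : p.Prime := Fact.out
  have hp2 := hp.two_le
  obtain ⟨N, rfl⟩ : ∃ N, p = N + 1 := ⟨p - 1, by omega⟩
  have hN : 1 ≤ N := by omega
  have hdyn : dynkin k (N+1) = dynkinPartial k (N+1) N := by
    rw [dynkin, dynkinPartial]
    norm_num
  refine ⟨0, ?_⟩
  rw [hdyn, key N N hN le_rfl]
  have hchoose : ∀ j : ℕ, j ≤ N → ((N.choose j : ℕ) : k) = (-1:k)^j := by
    intro j
    induction j with
    | zero => intro _; simp
    | succ j ihj =>
      intro hj
      have h0 : (((N+1).choose (j+1) : ℕ) : k) = 0 := by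
        rw [CharP.cast_eq_zero_iff k (N+1)]
        exact hp.dvd_choose_self (Nat.succ_ne_zero j) (by omega)
      rw [Nat.choose_succ_succ] at h0
      push_cast at h0
      rw [ihj (by omega)] at h0
      simp only [Nat.succ_eq_add_one] at h0
      have h1 : ((N.choose (j+1) : ℕ) : k) = -(-1:k)^j := by linear_combination h0
      rw [h1, pow_succ]
      ring
  have hD : ∑ t : Fin (N+1), (-1:k)^(t:ℕ) * ((N.choose (t:ℕ) : ℕ) : k) * f t = 0 := by
    rw [← hf]
    refine Finset.sum_congr rfl fun t _ => ?_
    rw [hchoose (t:ℕ) (by have := t.isLt; omega), ← mul_pow]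
    norm_num
  funext i
  rw [hD, mul_zero]
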